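/- Two integers have the same residue if and only if they are congruent or their sum is congruent to 2e+1: for all integers k, j, re(k) = re(j) if and only if k ≡ j (mod 2e+a) or k + j ≡ 2e+1 (mod 2e+a). -/
import Mathlib


/-- The residue function `re` of types `B`, `A^(2)`, `D^(2)`. -/
def residueFun (e a k : ℤ) : ℤ :=
  if k % (2*e+a) ≤ e then k % (2*e+a) else 2*e+1 - k % (2*e+a)

theorem residueFun_eq_iff (e a : ℤ) (he : 2 ≤ e) (ha : a = 1 ∨ a = 2) (k j : ℤ) :
    residueFun e a k = residueFun e a j ↔
      k ≡ j [ZMOD 2*e+a] ∨ k + j ≡ 2*e+1 [ZMOD 2*e+a] := by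
  have hn : 0 < 2*e+a := by rcases ha with h|h <;> omega
  have hne : (2*e+a) ≠ 0 := by omega
  unfold residueFun
  rw [Int.ModEq, Int.ModEq]
  have hk1 := Int.emod_nonneg k hne
  have hk2 := Int.emod_lt_of_pos k hn
  have hj1 := Int.emod_nonneg j hne
  have hj2 := Int.emod_lt_of_pos j hn
  have hadd : (k + j) % (2*e+a) = (k % (2*e+a) + j % (2*e+a)) % (2*e+a) :=
    Int.add_emod k j _
  set x := k % (2*e+a) with hx
  set y := j % (2*e+a) with hy
  have hxy : (x + y) % (2*e+a) = if x + y < 2*e+a then x + y else x + y - (2*e+a) := by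
    split_ifs with h
    · exact Int.emod_eq_of_lt (by omega) h
    · have h2 : x + y = (x + y - (2*e+a)) + (2*e+a) * 1 := by ring
      have h3 : (x + y) % (2*e+a) = (x + y - (2*e+a)) % (2*e+a) := by
        conv_lhs => rw [h2]
        rw [Int.add_mul_emod_self_left]
      rw [h3]
      refine Int.emod_eq_of_lt ?_ ?_ <;> omega
  have h21 : (2*e+1) % (2*e+a) = if a = 1 then 0 else 2*e+1 := by
    rcases ha with h|h <;> simp [h]
    · exact Int.emod_eq_of_lt (by omega) (by omega)
  rw [hadd, hxy, h21]
  split_ifs <;> omega
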